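/- Let H ∈ ℂ^{n×n} be a unitary lower Hessenberg matrix (h_{ij} = 0 for j > i + 1) and let B ∈ ℂ^{n×n} be a unitary k-upper Hessenberg matrix, with k < n. Then there exist a unitary k-upper Hessenberg matrix B̃ ∈ ℂ^{n×n} and a unitary lower Hessenberg matrix Ĥ ∈ ℂ^{(n−k)×(n−k)} such that H B = B̃ · diag(Ĥ, I_k). -/

import Mathlib

open Matrix

/-- `M` is `k`-upper Hessenberg: `m_{ij} = 0` whenever `i > j + k`. -/
def kUpperHessenberg (k : ℕ) {m : ℕ} (M : Matrix (Fin m) (Fin m) ℂ) : Prop :=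
  ∀ i j : Fin m, j.1 + k < i.1 → M i j = 0

/-- `M` is `k`-lower Hessenberg: `m_{ij} = 0` whenever `j > i + k`. -/
def kLowerHessenberg (k : ℕ) {m : ℕ} (M : Matrix (Fin m) (Fin m) ℂ) : Prop :=
  ∀ i j : Fin m, i.1 + k < j.1 → M i j = 0

/-- A `k`-upper Hessenberg matrix is proper: the outermost entries `h_{j+k,j}` are
all nonzero. -/
def ProperUpper (k : ℕ) {m : ℕ} (M : Matrix (Fin m) (Fin m) ℂ) : Prop :=
  ∀ i j : Fin m, i.1 = j.1 + k → M i j ≠ 0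

/-- A `k`-lower Hessenberg matrix is proper: the outermost entries `h_{j,j+k}` are
all nonzero. -/
def ProperLower (k : ℕ) {m : ℕ} (M : Matrix (Fin m) (Fin m) ℂ) : Prop :=
  ∀ i j : Fin m, j.1 = i.1 + k → M i j ≠ 0

/-- The block diagonal matrix `diag(Ĥ, I_k)` for `Ĥ ∈ ℂ^{(n−k)×(n−k)}`. -/
def diagHI (n k : ℕ) (Hh : Matrix (Fin (n - k)) (Fin (n - k)) ℂ) :
    Matrix (Fin n) (Fin n) ℂ :=
  Matrix.of fun x y =>
    if h : x.1 < n - k ∧ y.1 < n - k then Hh ⟨x.1, h.1⟩ ⟨y.1, h.2⟩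
    else if x.1 = y.1 then 1 else 0

noncomputable section TurnoverAux

namespace TurnoverAux

open Module

abbrev V (n : ℕ) := EuclideanSpace ℂ (Fin n)

/-- Coordinate subspace: vectors vanishing on coordinates `≥ m`. -/
def Ecut (n m : ℕ) : Submodule ℂ (V n) where
  carrier := {v | ∀ i : Fin n, m ≤ i.1 → v i = 0}
  add_mem' := by
    intro a b ha hb i hi
    have : (a + b) i = a i + b i := rfl
    rw [this, ha i hi, hb i hi, add_zero]
  zero_mem' := by intro i _; rfl
  smul_mem' := by
    intro c v hv i hi
    have : (c • v) i = c * v i := rfl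
    rw [this, hv i hi, mul_zero]

lemma mem_Ecut {n m : ℕ} {v : V n} : v ∈ Ecut n m ↔ ∀ i : Fin n, m ≤ i.1 → v i = 0 :=
  Iff.rfl

lemma Ecut_mono {n : ℕ} {m m' : ℕ} (h : m ≤ m') : Ecut n m ≤ Ecut n m' :=
  fun v hv i hi => hv i (le_trans h hi)

lemma Ecut_top {n m : ℕ} (h : n ≤ m) : Ecut n m = ⊤ := by
  apply eq_top_iff.2
  intro v _ i hi
  exact absurd (lt_of_lt_of_le i.2 (le_trans h hi)) (lt_irrefl _)

def EcutEquiv {n m : ℕ} (h : m ≤ n) : Ecut n m ≃ₗ[ℂ] (Fin m → ℂ) where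
  toFun v := fun i => v.1 (Fin.castLE h i)
  map_add' u v := rfl
  map_smul' c v := rfl
  invFun w := ⟨WithLp.toLp 2 (fun i : Fin n => if hi : i.1 < m then w ⟨i.1, hi⟩ else 0),
    fun i hi => dif_neg (by omega)⟩
  left_inv v := by
    apply Subtype.ext
    apply PiLp.ext; intro i
    by_cases hi : i.1 < m
    · simp only [PiLp.toLp_apply, dif_pos hi]
      rfl
    · simp only [PiLp.toLp_apply, dif_neg hi]
      exact (v.2 i (by omega)).symm
  right_inv w := by
    funext i
    have hi : (Fin.castLE h i).1 < m := i.2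
    simp only [PiLp.toLp_apply, dif_pos hi]
    exact congrArg w (Fin.ext rfl)

lemma finrank_Ecut {n m : ℕ} (h : m ≤ n) : finrank ℂ (Ecut n m) = m := by
  rw [(EcutEquiv h).finrank_eq, finrank_fintype_fun_eq_card, Fintype.card_fin]

lemma finrank_Ecut_le (n m : ℕ) : finrank ℂ (Ecut n m) ≤ m := by
  by_cases h : m ≤ n
  · exact le_of_eq (finrank_Ecut h)
  · calc finrank ℂ (Ecut n m) ≤ finrank ℂ (V n) := Submodule.finrank_le _
    _ = n := finrank_euclideanSpace_fin
    _ ≤ m := by omega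

/-- Multiplication by a matrix as a linear map on Euclidean space. -/
def L {n : ℕ} (M : Matrix (Fin n) (Fin n) ℂ) : V n →ₗ[ℂ] V n where
  toFun v := WithLp.toLp 2 (M *ᵥ v)
  map_add' x y := by simp [Matrix.mulVec_add]
  map_smul' c x := by simp [Matrix.mulVec_smul]

lemma L_apply {n : ℕ} (M : Matrix (Fin n) (Fin n) ℂ) (v : V n) : L M v = M *ᵥ v := rfl

lemma L_comp {n : ℕ} (M N : Matrix (Fin n) (Fin n) ℂ) :
    (L M).comp (L N) = L (M * N) := by
  apply LinearMap.ext
  intro v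
  exact congrArg (WithLp.toLp 2) (Matrix.mulVec_mulVec v.ofLp M N)

lemma map_L_mul {n : ℕ} (M N : Matrix (Fin n) (Fin n) ℂ) (W : Submodule ℂ (V n)) :
    W.map (L (M * N)) = (W.map (L N)).map (L M) := by
  rw [← L_comp, Submodule.map_comp]

lemma upperHess_map {n k m : ℕ} {M : Matrix (Fin n) (Fin n) ℂ}
    (hM : kUpperHessenberg k M) :
    (Ecut n m).map (L M) ≤ Ecut n (m + k) := by
  rintro x hx
  obtain ⟨v, hv, rfl⟩ := hx
  intro i hi
  show ∑ j, M i j * v j = 0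
  apply Finset.sum_eq_zero
  intro j _
  by_cases hj : j.1 + k < i.1
  · rw [hM i j hj, zero_mul]
  · rw [hv j (by omega), mul_zero]

lemma le_map_of_inv {n k m : ℕ} {M M' : Matrix (Fin n) (Fin n) ℂ}
    (hMM' : M' * M = 1) (hM : kUpperHessenberg k M) :
    Ecut n m ≤ (Ecut n (m + k)).map (L M') := by
  intro v hv
  refine ⟨WithLp.toLp 2 (M *ᵥ v), upperHess_map hM (Submodule.mem_map_of_mem hv), ?_⟩
  show WithLp.toLp 2 (M' *ᵥ (M *ᵥ v)) = v
  rw [Matrix.mulVec_mulVec, hMM', Matrix.one_mulVec, WithLp.toLp_ofLp]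

def unitEquiv {n : ℕ} {M M' : Matrix (Fin n) (Fin n) ℂ}
    (h1 : M * M' = 1) (h2 : M' * M = 1) : V n ≃ₗ[ℂ] V n :=
  LinearEquiv.ofLinear (L M) (L M')
    (by rw [L_comp, h1]; apply LinearMap.ext; intro v; exact congrArg (WithLp.toLp 2) (Matrix.one_mulVec v.ofLp))
    (by rw [L_comp, h2]; apply LinearMap.ext; intro v; exact congrArg (WithLp.toLp 2) (Matrix.one_mulVec v.ofLp))

lemma finrank_map_L {n : ℕ} {M M' : Matrix (Fin n) (Fin n) ℂ}
    (h1 : M * M' = 1) (h2 : M' * M = 1) (W : Submodule ℂ (V n)) :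
    finrank ℂ (W.map (L M)) = finrank ℂ W :=
  (unitEquiv h1 h2).finrank_map_eq W

lemma finrank_inf {n : ℕ} {A B C : Submodule ℂ (V n)} (hA : A ≤ C) (hB : B ≤ C) :
    finrank ℂ A + finrank ℂ B ≤ finrank ℂ (A ⊓ B : Submodule ℂ (V n)) + finrank ℂ C := by
  have h1 := Submodule.finrank_sup_add_finrank_inf_eq A B
  have h2 : finrank ℂ (A ⊔ B : Submodule ℂ (V n)) ≤ finrank ℂ C :=
    Submodule.finrank_mono (sup_le hA hB)
  omega

lemma exists_chain {n : ℕ} (t : ℕ) (S : ℕ → Submodule ℂ (V n))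
    (hdim : ∀ j < t, j + 1 ≤ finrank ℂ (S j)) :
    ∃ g : ℕ → V n, (∀ i < t, g i ∈ S i) ∧ (∀ i < t, ‖g i‖ = 1) ∧
      (∀ i < t, ∀ j < t, i ≠ j → (inner ℂ (g i) (g j) : ℂ) = 0) := by
  induction t with
  | zero =>
      exact ⟨fun _ => 0, fun i hi => absurd hi (Nat.not_lt_zero i),
        fun i hi => absurd hi (Nat.not_lt_zero i),
        fun i hi => absurd hi (Nat.not_lt_zero i)⟩
  | succ t ih =>
      classical
      obtain ⟨g, hg1, hg2, hg3⟩ := ih (fun j hj => hdim j (by omega))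
      set W : Submodule ℂ (V n) :=
        Submodule.span ℂ (((Finset.range t).image g : Finset (V n)) : Set (V n)) with hW
      have hWfin : finrank ℂ W ≤ t := by
        calc finrank ℂ W ≤ ((Finset.range t).image g).card :=
              finrank_span_finset_le_card _
          _ ≤ (Finset.range t).card := Finset.card_image_le
          _ = t := Finset.card_range t
      have horth := Submodule.finrank_add_finrank_orthogonal W
      rw [finrank_euclideanSpace_fin] at horth
      have hC : finrank ℂ (S t) + finrank ℂ Wᗮ
          ≤ finrank ℂ (S t ⊓ Wᗮ : Submodule ℂ (V n)) + finrank ℂ (⊤ : Submodule ℂ (V n)) :=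
        finrank_inf le_top le_top
      rw [finrank_top, finrank_euclideanSpace_fin] at hC
      have hSt := hdim t (by omega)
      have hpos : 0 < finrank ℂ (S t ⊓ Wᗮ : Submodule ℂ (V n)) := by omega
      have : Nontrivial (S t ⊓ Wᗮ : Submodule ℂ (V n)) := Module.nontrivial_of_finrank_pos hpos
      obtain ⟨x, hx⟩ := exists_ne (0 : (S t ⊓ Wᗮ : Submodule ℂ (V n)))
      have hx0 : (x : V n) ≠ 0 := fun h => hx (Subtype.ext h)
      have hxS : (x : V n) ∈ S t := (Submodule.mem_inf.1 x.2).1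
      have hxW : (x : V n) ∈ Wᗮ := (Submodule.mem_inf.1 x.2).2
      have hnx : ‖(x : V n)‖ ≠ 0 := norm_ne_zero_iff.2 hx0
      set c : ℂ := ((‖(x : V n)‖ : ℝ) : ℂ)⁻¹ with hc
      set x' : V n := c • (x : V n) with hx'
      have hnormx' : ‖x'‖ = 1 := by
        rw [hx', norm_smul, hc, norm_inv, Complex.norm_real, Real.norm_eq_abs,
          abs_of_nonneg (norm_nonneg _), inv_mul_cancel₀ hnx]
      refine ⟨Function.update g t x', ?_, ?_, ?_⟩
      · intro i hi
        by_cases h : i = t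
        · subst h
          rw [Function.update_self]
          exact Submodule.smul_mem _ _ hxS
        · rw [Function.update_of_ne h]
          exact hg1 i (by omega)
      · intro i hi
        by_cases h : i = t
        · subst h; rw [Function.update_self]; exact hnormx'
        · rw [Function.update_of_ne h]; exact hg2 i (by omega)
      · intro i hi j hj hij
        have key : ∀ l < t, (inner ℂ (g l) x' : ℂ) = 0 := by
          intro l hl
          have hgl : g l ∈ W := by
            apply Submodule.subset_span
            simp only [Finset.coe_image, Set.mem_image, Finset.mem_coe, Finset.mem_range]
            exact ⟨l, hl, rfl⟩
          have h0 : (inner ℂ (g l) (x : V n) : ℂ) = 0 :=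
            (Submodule.mem_orthogonal W (x : V n)).1 hxW (g l) hgl
          rw [hx', inner_smul_right, h0, mul_zero]
        by_cases h1 : i = t
        · rw [h1, Function.update_self, Function.update_of_ne (show j ≠ t by omega)]
          exact inner_eq_zero_symm.1 (key j (by omega))
        · by_cases h2 : j = t
          · rw [h2, Function.update_self, Function.update_of_ne h1]
            exact key i (by omega)
          · rw [Function.update_of_ne h1, Function.update_of_ne h2]
            exact hg3 i (by omega) j (by omega) hij
  

lemma sum_castLE {n m : ℕ} (h : m ≤ n) (f : Fin n → ℂ)
    (hf : ∀ i : Fin n, m ≤ i.1 → f i = 0) :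
    ∑ i : Fin n, f i = ∑ i : Fin m, f (Fin.castLE h i) := by
  classical
  have hinj : Function.Injective (Fin.castLE h) := Fin.castLE_injective h
  rw [← Finset.sum_image (f := f) (g := Fin.castLE h)
    (fun x _ y _ hxy => hinj hxy)]
  apply (Finset.sum_subset (Finset.subset_univ _) _).symm
  intro x _ hx
  apply hf
  by_contra hcon
  push_neg at hcon
  exact hx (Finset.mem_image.2 ⟨⟨x.1, hcon⟩, Finset.mem_univ _, Fin.ext rfl⟩)

def sumEquiv {n k : ℕ} (h : k ≤ n) : Fin (n - k) ⊕ Fin k ≃ Fin n :=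
  finSumFinEquiv.trans (finCongr (by omega : n - k + k = n))

lemma sumEquiv_val_inl {n k : ℕ} (h : k ≤ n) (a : Fin (n - k)) :
    (sumEquiv h (Sum.inl a)).1 = a.1 := by
  simp [sumEquiv, finSumFinEquiv]

lemma sumEquiv_val_inr {n k : ℕ} (h : k ≤ n) (b : Fin k) :
    (sumEquiv h (Sum.inr b)).1 = (n - k) + b.1 := by
  simp [sumEquiv, finSumFinEquiv, Fin.natAdd]

lemma diagHI_eq {n k : ℕ} (h : k ≤ n) (A : Matrix (Fin (n - k)) (Fin (n - k)) ℂ) :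
    diagHI n k A = (fromBlocks A 0 0 (1 : Matrix (Fin k) (Fin k) ℂ)).submatrix
      (sumEquiv h).symm (sumEquiv h).symm := by
  ext i j
  obtain ⟨p, rfl⟩ := (sumEquiv h).surjective i
  obtain ⟨q, rfl⟩ := (sumEquiv h).surjective j
  rw [Matrix.submatrix_apply, Equiv.symm_apply_apply, Equiv.symm_apply_apply]
  cases p with
  | inl a =>
    cases q with
    | inl b =>
      have h1 : (sumEquiv h (Sum.inl a)).1 = a.1 := sumEquiv_val_inl h a
      have h2 : (sumEquiv h (Sum.inl b)).1 = b.1 := sumEquiv_val_inl h b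
      have hc : (sumEquiv h (Sum.inl a)).1 < n - k ∧ (sumEquiv h (Sum.inl b)).1 < n - k := by
        rw [h1, h2]; exact ⟨a.2, b.2⟩
      show dite _ _ _ = _
      rw [dif_pos hc]
      show A ⟨_, hc.1⟩ ⟨_, hc.2⟩ = A a b
      congr 1 <;> exact Fin.ext (by rw [h1]) <|> exact Fin.ext (by rw [h2])
    | inr b =>
      have h1 : (sumEquiv h (Sum.inl a)).1 = a.1 := sumEquiv_val_inl h a
      have h2 : (sumEquiv h (Sum.inr b)).1 = (n - k) + b.1 := sumEquiv_val_inr h b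
      show dite _ _ _ = (0 : Matrix (Fin (n-k)) (Fin k) ℂ) a b
      rw [dif_neg (by rw [h1, h2]; omega), if_neg (by rw [h1, h2]; have := a.2; omega)]
      rfl
  | inr a =>
    cases q with
    | inl b =>
      have h1 : (sumEquiv h (Sum.inr a)).1 = (n - k) + a.1 := sumEquiv_val_inr h a
      have h2 : (sumEquiv h (Sum.inl b)).1 = b.1 := sumEquiv_val_inl h b
      show dite _ _ _ = (0 : Matrix (Fin k) (Fin (n-k)) ℂ) a b
      rw [dif_neg (by rw [h1]; omega), if_neg (by rw [h1, h2]; have := b.2; omega)]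
      rfl
    | inr b =>
      have h1 : (sumEquiv h (Sum.inr a)).1 = (n - k) + a.1 := sumEquiv_val_inr h a
      have h2 : (sumEquiv h (Sum.inr b)).1 = (n - k) + b.1 := sumEquiv_val_inr h b
      show dite _ _ _ = (1 : Matrix (Fin k) (Fin k) ℂ) a b
      rw [dif_neg (by rw [h1]; omega), Matrix.one_apply]
      by_cases hab : a = b
      · rw [if_pos (by rw [h1, h2, hab]), if_pos hab]
      · rw [if_neg (fun hv => hab (Fin.ext (by rw [h1, h2] at hv; omega))), if_neg hab]

lemma diagHI_mul {n k : ℕ} (h : k ≤ n) (A B : Matrix (Fin (n - k)) (Fin (n - k)) ℂ) :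
    diagHI n k A * diagHI n k B = diagHI n k (A * B) := by
  rw [diagHI_eq h A, diagHI_eq h B, diagHI_eq h (A * B),
    Matrix.submatrix_mul_equiv, fromBlocks_multiply]
  simp

lemma diagHI_one {n k : ℕ} (h : k ≤ n) : diagHI n k (1 : Matrix (Fin (n - k)) (Fin (n - k)) ℂ) = 1 := by
  rw [diagHI_eq h, fromBlocks_one]
  exact Matrix.submatrix_one_equiv _

lemma diagHI_star {n k : ℕ} (h : k ≤ n) (A : Matrix (Fin (n - k)) (Fin (n - k)) ℂ) :
    (diagHI n k A)ᴴ = diagHI n k Aᴴ := by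
  rw [diagHI_eq h A, diagHI_eq h Aᴴ, conjTranspose_submatrix, fromBlocks_conjTranspose]
  congr 1
  simp

end TurnoverAux


/-- **Turnover through a `k`-upper Hessenberg factor (lower Hessenberg case).**
If `H ∈ ℂ^{n×n}` is unitary lower Hessenberg and `B ∈ ℂ^{n×n}` is unitary `k`-upper
Hessenberg with `k < n`, then `H B = B̃ · diag(Ĥ, I_k)` for some unitary `k`-upper
Hessenberg `B̃ ∈ ℂ^{n×n}` and some unitary lower Hessenberg `Ĥ ∈ ℂ^{(n−k)×(n−k)}`. -/
theorem turnover_lower (n k : ℕ) (hk : k < n)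
    (H B : Matrix (Fin n) (Fin n) ℂ)
    (hHu : H ∈ Matrix.unitaryGroup (Fin n) ℂ) (hH : kLowerHessenberg 1 H)
    (hBu : B ∈ Matrix.unitaryGroup (Fin n) ℂ) (hB : kUpperHessenberg k B) :
    ∃ (Bt : Matrix (Fin n) (Fin n) ℂ)
      (Hh : Matrix (Fin (n - k)) (Fin (n - k)) ℂ),
      Bt ∈ Matrix.unitaryGroup (Fin n) ℂ ∧ kUpperHessenberg k Bt ∧
      Hh ∈ Matrix.unitaryGroup (Fin (n - k)) ℂ ∧ kLowerHessenberg 1 Hh ∧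
      H * B = Bt * diagHI n k Hh := by
  classical
  have hkn : k ≤ n := hk.le
  set U : Matrix (Fin n) (Fin n) ℂ := H * B with hUdef
  have hUu : U ∈ Matrix.unitaryGroup (Fin n) ℂ := mul_mem hHu hBu
  have hBs : Bᴴ * B = 1 := by
    have := (Unitary.mem_iff.mp hBu).1
    rwa [Matrix.star_eq_conjTranspose] at this
  have hUs : Uᴴ * U = 1 := by
    have := (Unitary.mem_iff.mp hUu).1
    rwa [Matrix.star_eq_conjTranspose] at this
  have hUs' : U * Uᴴ = 1 := by
    have := (Unitary.mem_iff.mp hUu).2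
    rwa [Matrix.star_eq_conjTranspose] at this
  have hHconj : kUpperHessenberg 1 Hᴴ := by
    intro i j hij
    rw [Matrix.conjTranspose_apply, hH j i hij, star_zero]
  set S : ℕ → Submodule ℂ (TurnoverAux.V n) := fun j =>
    TurnoverAux.Ecut n (min (j+2) (n-k)) ⊓
      (TurnoverAux.Ecut n (min (j+k+1) n)).map (TurnoverAux.L Uᴴ) with hSdef
  have hdim : ∀ j, j < n - k → j + 1 ≤ Module.finrank ℂ (S j) := by
    intro j hj
    show j + 1 ≤ Module.finrank ℂ (TurnoverAux.Ecut n (min (j+2) (n-k)) ⊓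
      (TurnoverAux.Ecut n (min (j+k+1) n)).map (TurnoverAux.L Uᴴ) : Submodule ℂ (TurnoverAux.V n))
    by_cases hcase : j + k + 2 ≤ n
    · have h1 : min (j+2) (n-k) = j+2 := by omega
      have h2 : min (j+k+1) n = j+k+1 := by omega
      rw [h1, h2]
      have hA : TurnoverAux.Ecut n (j+2) ≤ (TurnoverAux.Ecut n (j+k+2)).map (TurnoverAux.L Bᴴ) := by
        have := TurnoverAux.le_map_of_inv (m := j+2) hBs hB
        rwa [show j+2+k = j+k+2 by omega] at this
      have hB2 : (TurnoverAux.Ecut n (j+k+1)).map (TurnoverAux.L Uᴴ)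
          ≤ (TurnoverAux.Ecut n (j+k+2)).map (TurnoverAux.L Bᴴ) := by
        have he : Uᴴ = Bᴴ * Hᴴ := by rw [hUdef, Matrix.conjTranspose_mul]
        rw [he, TurnoverAux.map_L_mul]
        apply Submodule.map_mono
        have := TurnoverAux.upperHess_map (m := j+k+1) hHconj
        rwa [show j+k+1+1 = j+k+2 by omega] at this
      have hkey := TurnoverAux.finrank_inf hA hB2
      have hfA : Module.finrank ℂ (TurnoverAux.Ecut n (j+2)) = j+2 :=
        TurnoverAux.finrank_Ecut (by omega)
      have hfB : Module.finrank ℂ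
          ((TurnoverAux.Ecut n (j+k+1)).map (TurnoverAux.L Uᴴ)) = j+k+1 := by
        rw [TurnoverAux.finrank_map_L hUs hUs']
        exact TurnoverAux.finrank_Ecut (by omega)
      have hfC : Module.finrank ℂ
          ((TurnoverAux.Ecut n (j+k+2)).map (TurnoverAux.L Bᴴ)) ≤ j+k+2 := by
        calc Module.finrank ℂ ((TurnoverAux.Ecut n (j+k+2)).map (TurnoverAux.L Bᴴ))
            ≤ Module.finrank ℂ (TurnoverAux.Ecut n (j+k+2)) :=
              Submodule.finrank_map_le _ _
          _ = j+k+2 := TurnoverAux.finrank_Ecut (by omega)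
      omega
    · have h1 : min (j+2) (n-k) = n-k := by omega
      have h2 : min (j+k+1) n = n := by omega
      rw [h1, h2]
      have hmaptop : (TurnoverAux.Ecut n n).map (TurnoverAux.L Uᴴ) = ⊤ := by
        rw [TurnoverAux.Ecut_top le_rfl, Submodule.map_top, LinearMap.range_eq_top]
        intro v
        refine ⟨WithLp.toLp 2 (U *ᵥ v), ?_⟩
        show WithLp.toLp 2 (Uᴴ *ᵥ (U *ᵥ v)) = v
        rw [Matrix.mulVec_mulVec, hUs, Matrix.one_mulVec, WithLp.toLp_ofLp]
      rw [hmaptop, inf_top_eq, TurnoverAux.finrank_Ecut (by omega)]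
      omega
  obtain ⟨g, hg1, hg2, hg3⟩ := TurnoverAux.exists_chain (n - k) S hdim
  have hgE : ∀ j, j < n - k → ∀ i : Fin n, min (j+2) (n-k) ≤ i.1 → g j i = 0 :=
    fun j hj => (Submodule.mem_inf.1 (hg1 j hj)).1
  have hgU : ∀ j, j < n - k →
      g j ∈ (TurnoverAux.Ecut n (min (j+k+1) n)).map (TurnoverAux.L Uᴴ) :=
    fun j hj => (Submodule.mem_inf.1 (hg1 j hj)).2
  have hgnk : ∀ j, j < n - k → ∀ i : Fin n, n - k ≤ i.1 → g j i = 0 :=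
    fun j hj i hi => hgE j hj i (le_trans (min_le_right _ _) hi)
  set P : Matrix (Fin (n-k)) (Fin (n-k)) ℂ :=
    Matrix.of (fun a b : Fin (n-k) => g b.1 (Fin.castLE (Nat.sub_le n k) a)) with hPdef
  have hPu : Pᴴ * P = 1 := by
    ext a b
    rw [Matrix.mul_apply, Matrix.one_apply]
    have hterm : ∀ m : Fin (n-k), Pᴴ a m * P m b
        = star (g a.1 (Fin.castLE (Nat.sub_le n k) m))
          * g b.1 (Fin.castLE (Nat.sub_le n k) m) := by
      intro m
      rw [Matrix.conjTranspose_apply, hPdef]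
      rfl
    rw [Finset.sum_congr rfl (fun m _ => hterm m)]
    have hz : ∀ i : Fin n, n - k ≤ i.1 → star (g a.1 i) * g b.1 i = 0 := by
      intro i hi; rw [hgnk b.1 b.2 i hi, mul_zero]
    rw [← TurnoverAux.sum_castLE (Nat.sub_le n k)
      (fun i => star (g a.1 i) * g b.1 i) hz]
    have hip : (inner ℂ (g a.1) (g b.1) : ℂ) = ∑ i : Fin n, star (g a.1 i) * g b.1 i := by
      rw [PiLp.inner_apply]
      refine Finset.sum_congr rfl (fun i _ => ?_)
      rw [RCLike.inner_apply', starRingEnd_apply]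
    rw [← hip]
    by_cases hab : a = b
    · rw [if_pos hab, hab, @inner_self_eq_norm_sq_to_K ℂ, hg2 b.1 b.2]
      norm_num
    · rw [if_neg hab]
      exact hg3 a.1 a.2 b.1 b.2 (fun h => hab (Fin.ext h))
  have hPu' : P * Pᴴ = 1 := mul_eq_one_comm.1 hPu
  refine ⟨U * diagHI n k P, Pᴴ, ?_, ?_, ?_, ?_, ?_⟩
  · have hD : diagHI n k P ∈ Matrix.unitaryGroup (Fin n) ℂ := by
      rw [Matrix.mem_unitaryGroup_iff, Matrix.star_eq_conjTranspose,
        TurnoverAux.diagHI_star hkn, TurnoverAux.diagHI_mul hkn, hPu',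
        TurnoverAux.diagHI_one hkn]
    exact mul_mem hUu hD
  · intro i j hij
    have hjnk : j.1 < n - k := by have := i.2; omega
    have hcol : ∀ l : Fin n, diagHI n k P l j = g j.1 l := by
      intro l
      show (if h : l.1 < n - k ∧ j.1 < n - k then P ⟨l.1, h.1⟩ ⟨j.1, h.2⟩
        else if l.1 = j.1 then 1 else 0) = g j.1 l
      by_cases hl : l.1 < n - k
      · rw [dif_pos ⟨hl, hjnk⟩, hPdef]
        show g j.1 (Fin.castLE _ ⟨l.1, hl⟩) = g j.1 l
        exact congrArg (g j.1) (Fin.ext rfl)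
      · rw [dif_neg (fun hcon => hl hcon.1), if_neg (by omega),
          hgnk j.1 hjnk l (by omega)]
    rw [Matrix.mul_apply, Finset.sum_congr rfl (fun l _ => by rw [hcol l])]
    obtain ⟨v, hv, hveq⟩ := hgU j.1 hjnk
    have hUg : U *ᵥ (g j.1) = v := by
      rw [← hveq]
      show U *ᵥ (Uᴴ *ᵥ v) = v
      rw [Matrix.mulVec_mulVec, hUs', Matrix.one_mulVec]
    have hsum : ∑ l, U i l * g j.1 l = (U *ᵥ g j.1) i := rfl
    rw [hsum, hUg]
    exact hv i (le_trans (min_le_left _ _) (by omega))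
  · rw [Matrix.mem_unitaryGroup_iff, Matrix.star_eq_conjTranspose,
      Matrix.conjTranspose_conjTranspose]
    exact hPu
  · intro a b hab
    rw [Matrix.conjTranspose_apply, hPdef]
    show star (g a.1 (Fin.castLE _ b)) = 0
    rw [hgE a.1 a.2 (Fin.castLE _ b)
      (le_trans (min_le_left _ _) (show a.1 + 2 ≤ (Fin.castLE (Nat.sub_le n k) b).1 by
        show a.1 + 2 ≤ b.1; omega)), star_zero]
  · rw [Matrix.mul_assoc, TurnoverAux.diagHI_mul hkn, hPu',
      TurnoverAux.diagHI_one hkn, Matrix.mul_one]
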